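/- Let S be a submonoid of ℕ^d and let b ∈ S \ {0}. Then PF(S) ≠ ∅ if and only if Ap(S, b) has a ≼_S-maximal element. Moreover, PF(S) = {a − b : a is a ≼_S-maximal element of Ap(S, b)} (differences taken in ℤ^d). -/
import Mathlib


open scoped BigOperators

/-- The natural cast of an element of `ℕ^d` into `ℚ^d`. -/
def toQ {d : ℕ} (x : Fin d → ℕ) : Fin d → ℚ := fun i => (x i : ℚ)

/-- The natural cast of an element of `ℕ^d` into `ℤ^d`. -/
def natToZ {d : ℕ} (x : Fin d → ℕ) : Fin d → ℤ := fun i => (x i : ℤ)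

/-- The cone `pos(S)` of a submonoid `S ⊆ ℕ^d`: all nonnegative rational
combinations of elements of `S`, as a subset of `ℚ^d`. -/
def posCone {d : ℕ} (S : AddSubmonoid (Fin d → ℕ)) : Set (Fin d → ℚ) :=
  {q | ∃ (k : ℕ) (c : Fin k → ℚ) (s : Fin k → (Fin d → ℕ)),
    (∀ i, 0 ≤ c i) ∧ (∀ i, s i ∈ S) ∧ q = ∑ i, c i • toQ (s i)}

/-- The gap set `H(S) = (pos(S) \ S) ∩ ℕ^d`. -/
def gaps {d : ℕ} (S : AddSubmonoid (Fin d → ℕ)) : Set (Fin d → ℕ) :=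
  {x | toQ x ∈ posCone S ∧ x ∉ S}

/-- The set of pseudo-Frobenius elements of `S`. -/
def PF {d : ℕ} (S : AddSubmonoid (Fin d → ℕ)) : Set (Fin d → ℕ) :=
  {a | a ∈ gaps S ∧ ∀ s ∈ S, s ≠ 0 → a + s ∈ S}

/-- A term order on `ℕ^d`: a total order compatible with addition for which
`0` is the least element. -/
def IsTermOrder {d : ℕ} (r : (Fin d → ℕ) → (Fin d → ℕ) → Prop) : Prop :=
  (∀ a b, r a b ∨ r b a) ∧ (∀ a b, r a b → r b a → a = b) ∧
    (∀ a b c, r a b → r b c → r a c) ∧ (∀ a, r 0 a) ∧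
    (∀ a b c, r a b → r (a + c) (b + c))

/-- The set of Frobenius elements of `S`: maxima of `H(S)` for some term order. -/
def FrobSet {d : ℕ} (S : AddSubmonoid (Fin d → ℕ)) : Set (Fin d → ℕ) :=
  {f | f ∈ gaps S ∧ ∃ r, IsTermOrder r ∧ ∀ h ∈ gaps S, r h f}

/-- The Apéry set of `S` relative to `b`:
`Ap(S,b) = {a ∈ S : a - b ∈ pos(S) \ S}`, the difference taken in `ℚ^d`. -/
def Apery {d : ℕ} (S : AddSubmonoid (Fin d → ℕ)) (b : Fin d → ℕ) : Set (Fin d → ℕ) :=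
  {a | a ∈ S ∧ (toQ a - toQ b) ∈ posCone S ∧ ¬ ∃ s ∈ S, toQ s = toQ a - toQ b}

/-- The partial order `≼_S`: `x ≼_S y` iff `y - x ∈ S`. -/
def leS {d : ℕ} (S : AddSubmonoid (Fin d → ℕ)) (x y : Fin d → ℕ) : Prop :=
  ∃ s ∈ S, x + s = y

/-- `a` is a `≼_S`-maximal element of `X`. -/
def MaximalIn {d : ℕ} (S : AddSubmonoid (Fin d → ℕ)) (X : Set (Fin d → ℕ))
    (a : Fin d → ℕ) : Prop :=
  a ∈ X ∧ ∀ a' ∈ X, a' ≠ a → ¬ leS S a a'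

/-- `S` is irreducible: it is not the intersection of two submonoids of `ℕ^d`
each properly containing it. -/
def IrreducibleMonoid {d : ℕ} (S : AddSubmonoid (Fin d → ℕ)) : Prop :=
  ¬ ∃ S₁ S₂ : AddSubmonoid (Fin d → ℕ), S < S₁ ∧ S < S₂ ∧
    (S : Set (Fin d → ℕ)) = (S₁ : Set (Fin d → ℕ)) ∩ (S₂ : Set (Fin d → ℕ))

/-- The multiplicity of `S`: componentwise infimum of `S \ {0}`. -/
noncomputable def mult {d : ℕ} (S : AddSubmonoid (Fin d → ℕ)) : Fin d → ℕ :=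
  fun i => sInf {n | ∃ s ∈ S, s ≠ 0 ∧ s i = n}

/-- `S` is a PI-monoid: `S = (a + T) ∪ {0}` for some submonoid `T` of `ℕ^d`
and some `a ∈ T \ {0}`. -/
def IsPIMonoid {d : ℕ} (S : AddSubmonoid (Fin d → ℕ)) : Prop :=
  ∃ (T : AddSubmonoid (Fin d → ℕ)) (a : Fin d → ℕ), a ∈ T ∧ a ≠ 0 ∧
    (S : Set (Fin d → ℕ)) = {x | ∃ t ∈ T, x = a + t} ∪ {0}

/-- `G` is a minimal system of generators of `S`. -/
def IsMinimalGenSet {d : ℕ} (S : AddSubmonoid (Fin d → ℕ)) (G : Set (Fin d → ℕ)) : Prop :=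
  AddSubmonoid.closure G = S ∧ ∀ G' ⊂ G, AddSubmonoid.closure G' ≠ S

lemma toQ_add {d : ℕ} (x y : Fin d → ℕ) : toQ (x + y) = toQ x + toQ y := by
  funext i; simp [toQ]

lemma toQ_inj {d : ℕ} {x y : Fin d → ℕ} (h : toQ x = toQ y) : x = y := by
  funext i
  have := congrFun h i
  simp only [toQ] at this
  exact_mod_cast this

lemma mem_posCone_of_mem {d : ℕ} {S : AddSubmonoid (Fin d → ℕ)} {s : Fin d → ℕ}
    (hs : s ∈ S) : toQ s ∈ posCone S := by
  refine ⟨1, fun _ => 1, fun _ => s, fun _ => zero_le_one, fun _ => hs, ?_⟩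
  simp

lemma posCone_add {d : ℕ} {S : AddSubmonoid (Fin d → ℕ)} {p q : Fin d → ℚ}
    (hp : p ∈ posCone S) (hq : q ∈ posCone S) : p + q ∈ posCone S := by
  obtain ⟨k₁, c₁, s₁, hc₁, hs₁, rfl⟩ := hp
  obtain ⟨k₂, c₂, s₂, hc₂, hs₂, rfl⟩ := hq
  refine ⟨k₁ + k₂, Fin.addCases c₁ c₂, Fin.addCases s₁ s₂, ?_, ?_, ?_⟩
  · intro i
    refine Fin.addCases (fun j => ?_) (fun j => ?_) i <;> simp [hc₁, hc₂]
  · intro i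
    refine Fin.addCases (fun j => ?_) (fun j => ?_) i <;> simp [hs₁, hs₂]
  · rw [Fin.sum_univ_add]
    simp

lemma posCone_nonneg {d : ℕ} {S : AddSubmonoid (Fin d → ℕ)} {q : Fin d → ℚ}
    (hq : q ∈ posCone S) (i : Fin d) : 0 ≤ q i := by
  obtain ⟨k, c, s, hc, hs, rfl⟩ := hq
  simp only [Finset.sum_apply, Pi.smul_apply, smul_eq_mul]
  exact Finset.sum_nonneg fun j _ =>
    mul_nonneg (hc j) (by simp [toQ])

lemma pf_to_max {d : ℕ} {S : AddSubmonoid (Fin d → ℕ)} {b : Fin d → ℕ}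
    (hb : b ∈ S) (hb0 : b ≠ 0) {g : Fin d → ℕ} (hg : g ∈ PF S) :
    MaximalIn S (Apery S b) (g + b) := by
  obtain ⟨⟨hgc, hgS⟩, hgadd⟩ := hg
  have hgbS : g + b ∈ S := hgadd b hb hb0
  have habq : toQ (g + b) - toQ b = toQ g := by rw [toQ_add]; ring
  refine ⟨⟨hgbS, ?_, ?_⟩, ?_⟩
  · rw [habq]; exact hgc
  · rintro ⟨s, hsS, hs⟩
    rw [habq] at hs
    exact hgS (toQ_inj hs ▸ hsS)
  · rintro a' ⟨ha'S, ha'c, ha'n⟩ hne ⟨s, hsS, rfl⟩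
    have hs0 : s ≠ 0 := by rintro rfl; simp at hne
    apply ha'n
    refine ⟨g + s, hgadd s hsS hs0, ?_⟩
    rw [toQ_add, toQ_add, toQ_add]; ring

lemma max_to_pf {d : ℕ} {S : AddSubmonoid (Fin d → ℕ)} {b : Fin d → ℕ}
    (hb : b ∈ S) (hb0 : b ≠ 0) {a : Fin d → ℕ}
    (ha : MaximalIn S (Apery S b) a) : ∃ g ∈ PF S, a = g + b := by
  obtain ⟨⟨haS, hac, han⟩, hmax⟩ := ha
  have hle : ∀ i, b i ≤ a i := by
    intro i
    have := posCone_nonneg hac i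
    simp only [Pi.sub_apply, toQ, sub_nonneg] at this
    exact_mod_cast this
  refine ⟨a - b, ?_, ?_⟩
  swap
  · funext i; have := hle i; simp [Pi.add_apply, Pi.sub_apply]; omega
  have htq : toQ (a - b) = toQ a - toQ b := by
    funext i
    simp only [toQ, Pi.sub_apply]
    rw [Nat.cast_sub (hle i)]
  refine ⟨⟨?_, ?_⟩, ?_⟩
  · rw [htq]; exact hac
  · intro hmem
    exact han ⟨a - b, hmem, htq⟩
  · intro s hsS hs0
    by_contra hgs
    have haseq : a + s ∈ Apery S b := by
      refine ⟨S.add_mem haS hsS, ?_, ?_⟩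
      · have : toQ (a + s) - toQ b = toQ (a - b) + toQ s := by
          rw [toQ_add, htq]; ring
        rw [this]
        exact posCone_add (htq ▸ hac) (mem_posCone_of_mem hsS)
      · rintro ⟨t, htS, ht⟩
        have : toQ t = toQ (a - b + s) := by
          rw [toQ_add, htq, ht, toQ_add]; ring
        exact hgs (toQ_inj this ▸ htS)
    have hne : a + s ≠ a := by
      intro h
      exact hs0 (by simpa using congrArg (· - a) h)
    exact hmax (a + s) haseq hne ⟨s, hsS, rfl⟩

/-- `PF(S) ≠ ∅` iff `Ap(S, b)` has a `≼_S`-maximal element, and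
`PF(S) = {a - b : a ≼_S-maximal in Ap(S, b)}` (differences in `ℤ^d`). -/
theorem pf_eq_maximals_apery {d : ℕ} (S : AddSubmonoid (Fin d → ℕ))
    (b : Fin d → ℕ) (hb : b ∈ S) (hb0 : b ≠ 0) :
    ((PF S).Nonempty ↔ ∃ a, MaximalIn S (Apery S b) a) ∧
      natToZ '' PF S =
        {z | ∃ a, MaximalIn S (Apery S b) a ∧ z = natToZ a - natToZ b} := by
  constructor
  · constructor
    · rintro ⟨g, hg⟩
      exact ⟨g + b, pf_to_max hb hb0 hg⟩
    · rintro ⟨a, ha⟩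
      obtain ⟨g, hg, -⟩ := max_to_pf hb hb0 ha
      exact ⟨g, hg⟩
  · ext z
    constructor
    · rintro ⟨g, hg, rfl⟩
      refine ⟨g + b, pf_to_max hb hb0 hg, ?_⟩
      funext i; simp [natToZ]
    · rintro ⟨a, ha, rfl⟩
      obtain ⟨g, hg, rfl⟩ := max_to_pf hb hb0 ha
      refine ⟨g, hg, ?_⟩
      funext i; simp [natToZ]
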